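/- arXiv:1602.06026 — 2 statements merged into one kernel-verified Lean document; each statement's English description precedes it below -/
import Mathlib

section
/- Let F be a field and q ∈ F. Let M(q) be the 6×12 matrix over F with rows (q,0,0,0,0,0,0,0,0,0,1,−1), (0,q,0,0,0,0,0,0,0,1,0,−1), (0,0,q,0,0,0,0,0,0,1,−1,0), (0,0,0,1,0,0,0,−1,−1,0,0,0), (0,0,0,0,1,0,−1,0,1,0,0,0), (0,0,0,0,0,1,1,1,0,0,0,0). If q ≠ 0 then M(q) has rank 6, and if q = 0 then M(q) has rank 5. -/
set_option maxHeartbeats 1000000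

@[simp]
lemma Matrix.cons_val_five' {α : Type*} {m : ℕ} (x : α) (u : Fin (m + 5) → α) :
    Matrix.vecCons x u 5 = Matrix.vecHead (Matrix.vecTail (Matrix.vecTail
      (Matrix.vecTail (Matrix.vecTail u)))) :=
  rfl


@[simp]
lemma Matrix.cons_val_six' {α : Type*} {m : ℕ} (x : α) (u : Fin (m + 6) → α) :
    Matrix.vecCons x u 6 = Matrix.vecHead (Matrix.vecTail (Matrix.vecTail (Matrix.vecTail (Matrix.vecTail (Matrix.vecTail (u)))))) :=
  rfl

@[simp]
lemma Matrix.cons_val_seven' {α : Type*} {m : ℕ} (x : α) (u : Fin (m + 7) → α) :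
    Matrix.vecCons x u 7 = Matrix.vecHead (Matrix.vecTail (Matrix.vecTail (Matrix.vecTail (Matrix.vecTail (Matrix.vecTail (Matrix.vecTail (u))))))) :=
  rfl

@[simp]
lemma Matrix.cons_val_eight' {α : Type*} {m : ℕ} (x : α) (u : Fin (m + 8) → α) :
    Matrix.vecCons x u 8 = Matrix.vecHead (Matrix.vecTail (Matrix.vecTail (Matrix.vecTail (Matrix.vecTail (Matrix.vecTail (Matrix.vecTail (Matrix.vecTail (u)))))))) :=
  rfl

@[simp]
lemma Matrix.cons_val_nine' {α : Type*} {m : ℕ} (x : α) (u : Fin (m + 9) → α) :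
    Matrix.vecCons x u 9 = Matrix.vecHead (Matrix.vecTail (Matrix.vecTail (Matrix.vecTail (Matrix.vecTail (Matrix.vecTail (Matrix.vecTail (Matrix.vecTail (Matrix.vecTail (u))))))))) :=
  rfl

@[simp]
lemma Matrix.cons_val_ten' {α : Type*} {m : ℕ} (x : α) (u : Fin (m + 10) → α) :
    Matrix.vecCons x u 10 = Matrix.vecHead (Matrix.vecTail (Matrix.vecTail (Matrix.vecTail (Matrix.vecTail (Matrix.vecTail (Matrix.vecTail (Matrix.vecTail (Matrix.vecTail (Matrix.vecTail (u)))))))))) :=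
  rfl

@[simp]
lemma Matrix.cons_val_eleven' {α : Type*} {m : ℕ} (x : α) (u : Fin (m + 11) → α) :
    Matrix.vecCons x u 11 = Matrix.vecHead (Matrix.vecTail (Matrix.vecTail (Matrix.vecTail (Matrix.vecTail (Matrix.vecTail (Matrix.vecTail (Matrix.vecTail (Matrix.vecTail (Matrix.vecTail (Matrix.vecTail (u))))))))))) :=
  rfl

/-- The Hermite normal form matrix `M(q)` of the deformed relations has
rank 6 when `q ≠ 0` and rank 5 when `q = 0`. -/
theorem rank_deformed_HNF {F : Type*} [Field F] (q : F)
    (M : Matrix (Fin 6) (Fin 12) F)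
    (hM : M = !![q, 0, 0, 0, 0, 0,  0,  0,  0, 0,  1, -1;
                 0, q, 0, 0, 0, 0,  0,  0,  0, 1,  0, -1;
                 0, 0, q, 0, 0, 0,  0,  0,  0, 1, -1,  0;
                 0, 0, 0, 1, 0, 0,  0, -1, -1, 0,  0,  0;
                 0, 0, 0, 0, 1, 0, -1,  0,  1, 0,  0,  0;
                 0, 0, 0, 0, 0, 1,  1,  1,  0, 0,  0,  0]) :
    (q ≠ 0 → M.rank = 6) ∧ (q = 0 → M.rank = 5) := by
  subst hM
  constructor
  · -- q ≠ 0 : rank 6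
    intro hq
    set P : Matrix (Fin 12) (Fin 6) F :=
      !![1,0,0,0,0,0; 0,1,0,0,0,0; 0,0,1,0,0,0; 0,0,0,1,0,0; 0,0,0,0,1,0; 0,0,0,0,0,1;
         0,0,0,0,0,0; 0,0,0,0,0,0; 0,0,0,0,0,0; 0,0,0,0,0,0; 0,0,0,0,0,0; 0,0,0,0,0,0] with hP
    refine le_antisymm (Matrix.rank_le_card_height _) ?_
    have hprod :
        (!![q, 0, 0, 0, 0, 0,  0,  0,  0, 0,  1, -1;
            0, q, 0, 0, 0, 0,  0,  0,  0, 1,  0, -1;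
            0, 0, q, 0, 0, 0,  0,  0,  0, 1, -1,  0;
            0, 0, 0, 1, 0, 0,  0, -1, -1, 0,  0,  0;
            0, 0, 0, 0, 1, 0, -1,  0,  1, 0,  0,  0;
            0, 0, 0, 0, 0, 1,  1,  1,  0, 0,  0,  0] : Matrix (Fin 6) (Fin 12) F) * P
          = Matrix.diagonal ![q, q, q, 1, 1, 1] := by
      ext i j
      fin_cases i <;> fin_cases j <;>
        simp [hP, Matrix.mul_apply, Fin.sum_univ_succ, Matrix.diagonal]
    have h1 : (Matrix.diagonal ![q, q, q, 1, 1, 1] : Matrix (Fin 6) (Fin 6) F).rank = 6 := by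
      rw [Matrix.rank_of_isUnit]
      · simp
      · rw [Matrix.isUnit_iff_isUnit_det, Matrix.det_diagonal]
        simp [Fin.prod_univ_succ, hq]
    have h2 := Matrix.rank_mul_le_left
        (!![q, 0, 0, 0, 0, 0,  0,  0,  0, 0,  1, -1;
            0, q, 0, 0, 0, 0,  0,  0,  0, 1,  0, -1;
            0, 0, q, 0, 0, 0,  0,  0,  0, 1, -1,  0;
            0, 0, 0, 1, 0, 0,  0, -1, -1, 0,  0,  0;
            0, 0, 0, 0, 1, 0, -1,  0,  1, 0,  0,  0;
            0, 0, 0, 0, 0, 1,  1,  1,  0, 0,  0,  0] : Matrix (Fin 6) (Fin 12) F) P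
    rw [hprod, h1] at h2
    exact h2
  · -- q = 0 : rank 5
    intro hq
    subst hq
    have hle : (!![(0:F), 0, 0, 0, 0, 0,  0,  0,  0, 0,  1, -1;
            0, 0, 0, 0, 0, 0,  0,  0,  0, 1,  0, -1;
            0, 0, 0, 0, 0, 0,  0,  0,  0, 1, -1,  0;
            0, 0, 0, 1, 0, 0,  0, -1, -1, 0,  0,  0;
            0, 0, 0, 0, 1, 0, -1,  0,  1, 0,  0,  0;
            0, 0, 0, 0, 0, 1,  1,  1,  0, 0,  0,  0] : Matrix (Fin 6) (Fin 12) F).rank ≤ 5 := by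
      have hfac :
          (!![(0:F), 0, 0, 0, 0, 0,  0,  0,  0, 0,  1, -1;
              0, 0, 0, 0, 0, 0,  0,  0,  0, 1,  0, -1;
              0, 0, 0, 0, 0, 0,  0,  0,  0, 1, -1,  0;
              0, 0, 0, 1, 0, 0,  0, -1, -1, 0,  0,  0;
              0, 0, 0, 0, 1, 0, -1,  0,  1, 0,  0,  0;
              0, 0, 0, 0, 0, 1,  1,  1,  0, 0,  0,  0] : Matrix (Fin 6) (Fin 12) F)
            = (!![(1:F), -1, 0, 0, 0;
                  1, 0, 0, 0, 0;
                  0, 1, 0, 0, 0;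
                  0, 0, 1, 0, 0;
                  0, 0, 0, 1, 0;
                  0, 0, 0, 0, 1] : Matrix (Fin 6) (Fin 5) F) *
              (!![(0:F), 0, 0, 0, 0, 0,  0,  0,  0, 1,  0, -1;
                  0, 0, 0, 0, 0, 0,  0,  0,  0, 1, -1,  0;
                  0, 0, 0, 1, 0, 0,  0, -1, -1, 0,  0,  0;
                  0, 0, 0, 0, 1, 0, -1,  0,  1, 0,  0,  0;
                  0, 0, 0, 0, 0, 1,  1,  1,  0, 0,  0,  0] : Matrix (Fin 5) (Fin 12) F) := by
        ext i j
        fin_cases i <;> fin_cases j <;>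
          simp [Matrix.mul_apply, Fin.sum_univ_succ, Matrix.vecHead, Matrix.vecTail]
      rw [hfac]
      exact le_trans (Matrix.rank_mul_le_right _ _)
        ((Matrix.rank_le_card_height _).trans (by simp))
    refine le_antisymm hle ?_
    set Q : Matrix (Fin 5) (Fin 6) F :=
      !![1,0,0,0,0,0; 0,1,0,0,0,0; 0,0,0,1,0,0; 0,0,0,0,1,0; 0,0,0,0,0,1] with hQ
    set P : Matrix (Fin 12) (Fin 5) F :=
      !![0,0,0,0,0; 0,0,0,0,0; 0,0,0,0,0; 0,0,1,0,0; 0,0,0,1,0; 0,0,0,0,1;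
         0,0,0,0,0; 0,0,0,0,0; 0,0,0,0,0; 0,1,0,0,0; 1,0,0,0,0; 0,0,0,0,0] with hP
    have hid : Q * (!![(0:F), 0, 0, 0, 0, 0,  0,  0,  0, 0,  1, -1;
            0, 0, 0, 0, 0, 0,  0,  0,  0, 1,  0, -1;
            0, 0, 0, 0, 0, 0,  0,  0,  0, 1, -1,  0;
            0, 0, 0, 1, 0, 0,  0, -1, -1, 0,  0,  0;
            0, 0, 0, 0, 1, 0, -1,  0,  1, 0,  0,  0;
            0, 0, 0, 0, 0, 1,  1,  1,  0, 0,  0,  0] : Matrix (Fin 6) (Fin 12) F) * P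
          = (1 : Matrix (Fin 5) (Fin 5) F) := by
      ext i j
      fin_cases i <;> fin_cases j <;>
        simp [hQ, hP, Matrix.mul_apply, Fin.sum_univ_succ, Matrix.one_apply]
    have h2 : ((Q * !![(0:F), 0, 0, 0, 0, 0,  0,  0,  0, 0,  1, -1;
            0, 0, 0, 0, 0, 0,  0,  0,  0, 1,  0, -1;
            0, 0, 0, 0, 0, 0,  0,  0,  0, 1, -1,  0;
            0, 0, 0, 1, 0, 0,  0, -1, -1, 0,  0,  0;
            0, 0, 0, 0, 1, 0, -1,  0,  1, 0,  0,  0;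
            0, 0, 0, 0, 0, 1,  1,  1,  0, 0,  0,  0]) * P).rank ≤
        (!![(0:F), 0, 0, 0, 0, 0,  0,  0,  0, 0,  1, -1;
            0, 0, 0, 0, 0, 0,  0,  0,  0, 1,  0, -1;
            0, 0, 0, 0, 0, 0,  0,  0,  0, 1, -1,  0;
            0, 0, 0, 1, 0, 0,  0, -1, -1, 0,  0,  0;
            0, 0, 0, 0, 1, 0, -1,  0,  1, 0,  0,  0;
            0, 0, 0, 0, 0, 1,  1,  1,  0, 0,  0,  0] : Matrix (Fin 6) (Fin 12) F).rank :=
      le_trans (Matrix.rank_mul_le_left _ _) (Matrix.rank_mul_le_right _ _)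
    rw [hid] at h2
    simpa using h2
end

section
/- Let F be a field of characteristic zero, q ∈ F with q ≠ −3, and M an F-vector space with two F-bilinear operations ≺ and ≻ satisfying, for all a, b, c in M, the three deformed dendriform relations with parameter q: (q+3)[(a≻b)≺c − a≻(b≺c)] + (q−1)[a≻(c≺b) − b≻(a≺c) + b≻(c≺a) − c≻(a≺b)] = 0; (q+3)[(a≺b)≻c + (a≻b)≻c − a≻(b≻c)] + (q−1)[a≻(c≻b) − b≻(a≻c) + b≻(c≻a) − c≻(a≻b)] = 0; (q+3)[(a≺b)≺c − a≺(b≺c) − a≺(b≻c)] + (q−1)[a≺(c≺b) − b≺(a≺c) + b≺(c≺a) − c≺(a≺b) + a≺(c≻b) − b≺(a≻c) + b≺(c≻a) − c≺(a≻b)] = 0. Define the total product ab := a≺b + a≻b, and the polarized operations [a,b] := (1/2)(ab − ba), a∘b := (1/2)(ab + ba). Then for all a, b, c in M the three relations of the deformed polarized associative operad SA_q hold: [[a,b],c] − [[a,c],b] + [[b,c],a] = 0, q·[[a,c],b] + (a∘b)∘c − (b∘c)∘a = 0, and [a∘b,c] − [a,c]∘b − [b,c]∘a = 0. -/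
set_option maxHeartbeats 1000000


/-- If `q ≠ −3` and the three deformed dendriform relations with
parameter `q` hold, then the polarization of the total product `ab := a≺b + a≻b`
satisfies the three relations of the deformed polarized associative operad `SA_q`. -/
theorem deformed_dendriform_gives_SAq {F M : Type*} [Field F] [CharZero F]
    [AddCommGroup M] [Module F M]
    (l r : M →ₗ[F] M →ₗ[F] M) (q : F) (hq : q ≠ -3)
    (hD1 : ∀ a b c : M,
      (q + 3) • (l (r a b) c - r a (l b c))
        + (q - 1) • (r a (l c b) - r b (l a c) + r b (l c a) - r c (l a b)) = 0)
    (hD2 : ∀ a b c : M,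
      (q + 3) • (r (l a b) c + r (r a b) c - r a (r b c))
        + (q - 1) • (r a (r c b) - r b (r a c) + r b (r c a) - r c (r a b)) = 0)
    (hD3 : ∀ a b c : M,
      (q + 3) • (l (l a b) c - l a (l b c) - l a (r b c))
        + (q - 1) • (l a (l c b) - l b (l a c) + l b (l c a) - l c (l a b)
            + l a (r c b) - l b (r a c) + l b (r c a) - l c (r a b)) = 0)
    (mul br jo : M → M → M)
    (hmul : ∀ a b, mul a b = l a b + r a b)
    (hbr : ∀ a b, br a b = (2 : F)⁻¹ • (mul a b - mul b a))
    (hjo : ∀ a b, jo a b = (2 : F)⁻¹ • (mul a b + mul b a)) :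
    ∀ a b c : M,
      br (br a b) c - br (br a c) b + br (br b c) a = 0 ∧
      q • br (br a c) b + jo (jo a b) c - jo (jo b c) a = 0 ∧
      br (jo a b) c - jo (br a c) b - jo (br b c) a = 0 := by
  intro a b c
  have hq3 : (q + 3 : F) ≠ 0 := fun h => hq (by linear_combination h)
  have inj : Function.Injective (fun x : M => (q + 3) • x) :=
    smul_right_injective M hq3
  have H : ∀ x y z : M,
      (q + 3) • (l (l x y) z + l (r x y) z + r (l x y) z + r (r x y) z
          - l x (l y z) - l x (r y z) - r x (l y z) - r x (r y z))
        + (q - 1) • ((l x (l z y) + l x (r z y) + r x (l z y) + r x (r z y))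
            - (l y (l x z) + l y (r x z) + r y (l x z) + r y (r x z))
            + (l y (l z x) + l y (r z x) + r y (l z x) + r y (r z x))
            - (l z (l x y) + l z (r x y) + r z (l x y) + r z (r x y))) = 0 := by
    intro x y z
    linear_combination (norm := module) hD1 x y z + hD2 x y z + hD3 x y z
  refine ⟨?_, ?_, ?_⟩
  · apply inj
    simp only [hbr, hjo, hmul]
    simp only [map_add, map_sub, map_smul, LinearMap.add_apply, LinearMap.sub_apply,
      LinearMap.smul_apply, smul_zero]
    linear_combination (norm := module) ((4:F)⁻¹) • H a b c - ((4:F)⁻¹) • H a c b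
      - ((4:F)⁻¹) • H b a c + ((4:F)⁻¹) • H b c a
      + ((4:F)⁻¹) • H c a b - ((4:F)⁻¹) • H c b a
  · apply inj
    simp only [hbr, hjo, hmul]
    simp only [map_add, map_sub, map_smul, LinearMap.add_apply, LinearMap.sub_apply,
      LinearMap.smul_apply, smul_zero]
    linear_combination (norm := module) ((4:F)⁻¹) • H a b c + (q * (4:F)⁻¹) • H a c b
      + ((4:F)⁻¹) • H b a c - ((4:F)⁻¹) • H b c a
      - (q * (4:F)⁻¹) • H c a b - ((4:F)⁻¹) • H c b a
  · apply inj
    simp only [hbr, hjo, hmul]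
    simp only [map_add, map_sub, map_smul, LinearMap.add_apply, LinearMap.sub_apply,
      LinearMap.smul_apply, smul_zero]
    linear_combination (norm := module) ((4:F)⁻¹) • H a b c - ((4:F)⁻¹) • H a c b
      + ((4:F)⁻¹) • H b a c - ((4:F)⁻¹) • H b c a
      + ((4:F)⁻¹) • H c a b + ((4:F)⁻¹) • H c b a
end
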